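/- Let ρ > 0 and let W ∈ ℝ^{I×K} be entrywise nonnegative with every column summing to ρ, rank(W) = K, and W^T satisfying the SSC. Let Q ∈ ℝ^{K×K} be invertible, not a permutation matrix, and such that W·Q is entrywise nonnegative with every column summing to ρ. Then det((W·Q)^T·(W·Q)) < det(W^T·W). -/

import Mathlib

open Matrix BigOperators

/-- Euclidean norm of a real vector. -/
noncomputable def l2norm {m : Type*} [Fintype m] (x : m → ℝ) : ℝ :=
  Real.sqrt (∑ i, (x i) ^ 2)

/-- `P` is a permutation matrix. -/
def IsPermMatrix {K : ℕ} (P : Matrix (Fin K) (Fin K) ℝ) : Prop :=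
  ∃ σ : Equiv.Perm (Fin K), ∀ i j, P i j = if σ i = j then 1 else 0

/-- The conic hull of the columns of `H`. -/
def coneOf {K : ℕ} {J : Type*} [Fintype J] (H : Matrix (Fin K) J ℝ) : Set (Fin K → ℝ) :=
  {x | ∃ θ : J → ℝ, (∀ j, 0 ≤ θ j) ∧ x = H.mulVec θ}

/-- The second-order cone `C = {x : √(K-1) ‖x‖₂ ≤ ∑ᵢ xᵢ}`. -/
def socC (K : ℕ) : Set (Fin K → ℝ) :=
  {x | Real.sqrt ((K : ℝ) - 1) * l2norm x ≤ ∑ i, x i}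

/-- The sufficiently scattered condition. -/
def SSC {K : ℕ} {J : Type*} [Fintype J] (H : Matrix (Fin K) J ℝ) : Prop :=
  socC K ⊆ coneOf H ∧
  ∀ Q : Matrix (Fin K) (Fin K) ℝ, Qᵀ * Q = 1 → ¬ IsPermMatrix Q → ¬ (coneOf H ⊆ coneOf Q)

/-! ### Auxiliary lemmas -/

lemma ones_mem_socC (K : ℕ) : (fun _ => (1:ℝ)) ∈ socC K := by
  show Real.sqrt ((K : ℝ) - 1) * l2norm (fun _ => (1:ℝ)) ≤ ∑ _i : Fin K, (1:ℝ)
  have h1 : l2norm (fun _ : Fin K => (1:ℝ)) = Real.sqrt K := by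
    simp [l2norm]
  rw [h1]
  have h2 : ∑ _i : Fin K, (1:ℝ) = K := by simp
  rw [h2]
  calc Real.sqrt ((K:ℝ)-1) * Real.sqrt K = Real.sqrt (((K:ℝ)-1)*K) :=
        (Real.sqrt_mul' _ (Nat.cast_nonneg K)).symm
    _ ≤ Real.sqrt ((K:ℝ)*K) := by
        apply Real.sqrt_le_sqrt; nlinarith [(Nat.cast_nonneg K : (0:ℝ) ≤ (K:ℝ))]
    _ = K := Real.sqrt_mul_self (Nat.cast_nonneg K)

/-- Any vector in the dual cone of the second-order cone `C` satisfies `‖q‖₂ ≤ ∑ q`. -/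
lemma dual_bound {K : ℕ} (q : Fin K → ℝ)
    (hq : ∀ x ∈ socC K, 0 ≤ ∑ j, x j * q j) :
    ∑ j, (q j)^2 ≤ (∑ j, q j)^2 := by
  rcases Nat.eq_zero_or_pos K with hK | hK
  · subst hK; simp
  have hKR : (0:ℝ) < K := by exact_mod_cast hK
  have hK1 : (0:ℝ) ≤ (K:ℝ) - 1 := by
    have : (1:ℝ) ≤ K := by exact_mod_cast hK
    linarith
  set s := ∑ j, q j with hs
  have hs0 : 0 ≤ s := by
    have := hq (fun _ => 1) (ones_mem_socC K)
    simpa using this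
  set m := s / (K:ℝ) with hm
  set r := fun j => q j - m with hr
  have hrsum : ∑ j, r j = 0 := by
    simp only [hr, Finset.sum_sub_distrib, Finset.sum_const, Finset.card_univ,
      Fintype.card_fin, nsmul_eq_mul, hm]
    field_simp
    linarith [hs]
  set R2 := ∑ j, (r j)^2 with hR2
  have hR2nn : 0 ≤ R2 := Finset.sum_nonneg fun j _ => sq_nonneg _
  set c := Real.sqrt ((K:ℝ)-1) * Real.sqrt R2 with hc
  have hc0 : 0 ≤ c := mul_nonneg (Real.sqrt_nonneg _) (Real.sqrt_nonneg _)
  have hc2 : c^2 = ((K:ℝ)-1) * R2 := by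
    rw [hc, mul_pow, Real.sq_sqrt hK1, Real.sq_sqrt hR2nn]
  set x := fun j => c - Real.sqrt K * r j with hx
  have hxsum : ∑ j, x j = (K:ℝ) * c := by
    simp only [hx, Finset.sum_sub_distrib, Finset.sum_const, Finset.card_univ,
      Fintype.card_fin, nsmul_eq_mul, ← Finset.mul_sum, hrsum, mul_zero, sub_zero]
  have hxsq : ∑ j, (x j)^2 = (K:ℝ)*c^2 + (K:ℝ)*R2 := by
    have e : ∀ j, (x j)^2 = c^2 - (2*c*Real.sqrt K) * r j + (K:ℝ) * (r j)^2 := by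
      intro j
      have hK' : Real.sqrt K ^ 2 = (K:ℝ) := Real.sq_sqrt hKR.le
      rw [hx]
      linear_combination (r j)^2 * hK'
    calc ∑ j, (x j)^2 = ∑ j, (c^2 - (2*c*Real.sqrt K) * r j + (K:ℝ) * (r j)^2) :=
          Finset.sum_congr rfl fun j _ => e j
      _ = (K:ℝ)*c^2 - (2*c*Real.sqrt K) * (∑ j, r j) + (K:ℝ)*R2 := by
          rw [Finset.sum_add_distrib, Finset.sum_sub_distrib, ← Finset.mul_sum, ← Finset.mul_sum]
          simp [Finset.card_univ, mul_comm]
          exact Or.inl hR2.symm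
      _ = (K:ℝ)*c^2 + (K:ℝ)*R2 := by rw [hrsum]; ring
  have hxmem : x ∈ socC K := by
    show Real.sqrt ((K:ℝ)-1) * l2norm x ≤ ∑ j, x j
    rw [hxsum, l2norm, hxsq]
    have h1 : (K:ℝ)*c^2 + (K:ℝ)*R2 = (K:ℝ)*((K:ℝ)*R2) := by rw [hc2]; ring
    rw [h1, ← Real.sqrt_mul hK1]
    have h2 : ((K:ℝ)-1)*((K:ℝ)*((K:ℝ)*R2)) = ((K:ℝ)*c)^2 := by
      rw [mul_pow, hc2]; ring
    rw [h2, Real.sqrt_sq (by positivity)]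
  have hkey := hq x hxmem
  have hxq : ∑ j, x j * q j = c*s - Real.sqrt K * R2 := by
    have e : ∀ j, x j * q j = c * q j - Real.sqrt K * ((r j)^2 + m * r j) := by
      intro j
      have hqj : q j = r j + m := by rw [hr]; ring
      rw [hx, hqj]; ring
    calc ∑ j, x j * q j
        = ∑ j, (c * q j - Real.sqrt K * ((r j)^2 + m * r j)) :=
          Finset.sum_congr rfl fun j _ => e j
      _ = c * s - Real.sqrt K * (R2 + m * (∑ j, r j)) := by
          rw [Finset.sum_sub_distrib, ← Finset.mul_sum, ← Finset.mul_sum,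
            Finset.sum_add_distrib, ← Finset.mul_sum, hs]
      _ = c*s - Real.sqrt K * R2 := by rw [hrsum]; ring
  rw [hxq] at hkey
  have hq2 : ∑ j, (q j)^2 = R2 + (K:ℝ)*m^2 := by
    have e : ∀ j, (q j)^2 = (r j)^2 + (2*m)*r j + m^2 := by
      intro j
      have hqj : q j = r j + m := by rw [hr]; ring
      rw [hqj]; ring
    calc ∑ j, (q j)^2 = ∑ j, ((r j)^2 + (2*m)*r j + m^2) :=
          Finset.sum_congr rfl fun j _ => e j
      _ = R2 + (2*m)*(∑ j, r j) + (K:ℝ)*m^2 := by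
          rw [Finset.sum_add_distrib, Finset.sum_add_distrib, ← Finset.mul_sum]
          simp [Finset.card_univ, mul_comm]
          exact hR2.symm
      _ = R2 + (K:ℝ)*m^2 := by rw [hrsum]; ring
  have hR2le : (K:ℝ)*R2 ≤ ((K:ℝ)-1)*s^2 := by
    rcases eq_or_lt_of_le hR2nn with h0 | h0
    · rw [← h0]
      have : (0:ℝ) ≤ ((K:ℝ)-1)*s^2 := by positivity
      linarith
    · have hsr : 0 < Real.sqrt R2 := Real.sqrt_pos.mpr h0
      have e2 : Real.sqrt R2 * Real.sqrt R2 = R2 := Real.mul_self_sqrt hR2nn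
      have h6 : (Real.sqrt K * Real.sqrt R2) * Real.sqrt R2
          ≤ (Real.sqrt ((K:ℝ)-1) * s) * Real.sqrt R2 := by
        have hck : c * s - Real.sqrt K * R2 = (Real.sqrt ((K:ℝ)-1)*s)*Real.sqrt R2
            - (Real.sqrt K * Real.sqrt R2)*Real.sqrt R2 := by
          rw [hc]; linear_combination Real.sqrt K * e2
        linarith [hkey, hck.symm.le]
      have h3 : Real.sqrt K * Real.sqrt R2 ≤ Real.sqrt ((K:ℝ)-1) * s :=
        le_of_mul_le_mul_right h6 hsr
      have e1 : Real.sqrt K * Real.sqrt K = (K:ℝ) := Real.mul_self_sqrt hKR.le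
      have e3 : Real.sqrt ((K:ℝ)-1) * Real.sqrt ((K:ℝ)-1) = (K:ℝ)-1 := Real.mul_self_sqrt hK1
      have hsq := mul_self_le_mul_self (by positivity) h3
      calc (K:ℝ)*R2 = (Real.sqrt K * Real.sqrt R2) * (Real.sqrt K * Real.sqrt R2) := by
            rw [mul_mul_mul_comm, e1, e2]
        _ ≤ (Real.sqrt ((K:ℝ)-1) * s) * (Real.sqrt ((K:ℝ)-1) * s) := hsq
        _ = ((K:ℝ)-1)*s^2 := by rw [mul_mul_mul_comm, e3]; ring
  rw [hq2]
  have hm2 : (K:ℝ)*((K:ℝ)*m^2) = s^2 := by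
    rw [hm]; field_simp
  have goal' : (K:ℝ) * (R2 + (K:ℝ)*m^2) ≤ (K:ℝ)*s^2 := by nlinarith [hR2le, hm2]
  exact le_of_mul_le_mul_left goal' hKR

lemma trace_eq_sum_eig {n : ℕ} (A : Matrix (Fin n) (Fin n) ℝ) (h : A.IsHermitian) :
    A.trace = ∑ i, h.eigenvalues i := by
  have hu1 : star (h.eigenvectorUnitary : Matrix (Fin n) (Fin n) ℝ) *
      (h.eigenvectorUnitary : Matrix (Fin n) (Fin n) ℝ) = 1 :=
    (Matrix.mem_unitaryGroup_iff').mp (h.eigenvectorUnitary).2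
  conv_lhs => rw [h.spectral_theorem, Unitary.conjStarAlgAut_apply]
  rw [Matrix.trace_mul_comm, ← Matrix.mul_assoc, hu1, Matrix.one_mul, Matrix.trace_diagonal]
  simp

lemma herm_eq_one {n : ℕ} (A : Matrix (Fin n) (Fin n) ℝ) (h : A.IsHermitian)
    (he : ∀ i, h.eigenvalues i = 1) : A = 1 := by
  have hu1 : (h.eigenvectorUnitary : Matrix (Fin n) (Fin n) ℝ) *
      star (h.eigenvectorUnitary : Matrix (Fin n) (Fin n) ℝ) = 1 :=
    (Matrix.mem_unitaryGroup_iff).mp (h.eigenvectorUnitary).2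
  have hd : Matrix.diagonal (RCLike.ofReal ∘ h.eigenvalues) = (1 : Matrix (Fin n) (Fin n) ℝ) := by
    funext i j
    simp [Matrix.diagonal_apply, Matrix.one_apply, he]
  rw [h.spectral_theorem, hd, map_one]

lemma det_eq_prod_eig {n : ℕ} (A : Matrix (Fin n) (Fin n) ℝ) (h : A.IsHermitian) :
    A.det = ∏ i, h.eigenvalues i := by
  have := h.det_eq_prod_eigenvalues
  simpa using this

/-- A real PSD matrix with trace at most `n` and determinant at least 1 is the identity. -/
lemma psd_eq_one {n : ℕ} (S : Matrix (Fin n) (Fin n) ℝ) (hS : S.PosSemidef)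
    (htr : S.trace ≤ (n:ℝ)) (hdet : 1 ≤ S.det) : S = 1 := by
  have hH := hS.1
  set μ := hH.eigenvalues with hμ
  have hμ0 : ∀ i, 0 ≤ μ i := fun i => hS.eigenvalues_nonneg i
  have hsum : ∑ i, μ i ≤ (n:ℝ) := by rw [← trace_eq_sum_eig S hH]; exact htr
  have hprod : 1 ≤ ∏ i, μ i := by rw [← det_eq_prod_eig S hH]; exact hdet
  have hle : ∀ i : Fin n, μ i ≤ Real.exp (μ i - 1) := by
    intro i
    have := Real.add_one_le_exp (μ i - 1)
    linarith
  have hpe : ∏ i, Real.exp (μ i - 1) = Real.exp ((∑ i, μ i) - n) := by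
    rw [← Real.exp_sum]
    congr 1
    rw [Finset.sum_sub_distrib]
    simp
  have hub : Real.exp ((∑ i, μ i) - (n:ℝ)) ≤ 1 := by
    rw [← Real.exp_zero]
    exact Real.exp_le_exp.mpr (by linarith)
  apply herm_eq_one S hH
  intro i
  by_contra hne
  have hstrict : μ i < Real.exp (μ i - 1) := by
    have := Real.add_one_lt_exp (x := μ i - 1) (by intro h0; apply hne; linarith)
    linarith
  have hμpos : ∀ j, 0 < μ j := by
    intro j
    rcases (hμ0 j).lt_or_eq with h|h
    · exact h
    · exfalso
      have : ∏ i, μ i = 0 := Finset.prod_eq_zero (Finset.mem_univ j) h.symm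
      linarith
  have hlt : ∏ j, μ j < ∏ j, Real.exp (μ j - 1) :=
    Finset.prod_lt_prod (fun j _ => hμpos j) (fun j _ => hle j)
      ⟨i, Finset.mem_univ i, hstrict⟩
  rw [hpe] at hlt
  linarith

lemma det_pos_of_rank {I K : ℕ} (W : Matrix (Fin I) (Fin K) ℝ) (hWrank : W.rank = K) :
    0 < (Wᵀ * W).det := by
  have hpsd : (Wᵀ * W).PosSemidef := by
    have := Matrix.posSemidef_conjTranspose_mul_self W
    rwa [Matrix.conjTranspose_eq_transpose_of_trivial] at this
  have hnn : 0 ≤ (Wᵀ * W).det := by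
    rw [det_eq_prod_eig _ hpsd.1]
    exact Finset.prod_nonneg fun i _ => hpsd.eigenvalues_nonneg i
  have hrk : (Wᵀ * W).rank = K := by rw [Matrix.rank_transpose_mul_self, hWrank]
  have hUnit : IsUnit (Wᵀ * W) := by
    rw [← Matrix.mulVec_surjective_iff_isUnit]
    have hr : LinearMap.range (Wᵀ * W).mulVecLin = ⊤ := by
      apply Submodule.eq_top_of_finrank_eq
      rw [← Matrix.rank, hrk]
      simp
    have hsurj := LinearMap.range_eq_top.mp hr
    intro y
    obtain ⟨x, hx⟩ := hsurj y
    exact ⟨x, hx⟩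
  have hne : (Wᵀ * W).det ≠ 0 := by
    intro h0
    exact (Matrix.isUnit_iff_isUnit_det _ |>.mp hUnit).ne_zero (by simpa using h0)
  exact lt_of_le_of_ne hnn (Ne.symm hne)

theorem stmt11 {I K : ℕ} (ρ : ℝ) (hρ : 0 < ρ)
    (W : Matrix (Fin I) (Fin K) ℝ)
    (hW0 : ∀ i k, 0 ≤ W i k) (hW1 : ∀ k, ∑ i, W i k = ρ)
    (hWrank : W.rank = K) (hWssc : SSC Wᵀ)
    (Q : Matrix (Fin K) (Fin K) ℝ) (hQinv : Q.det ≠ 0) (hQnp : ¬ IsPermMatrix Q)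
    (hWQ0 : ∀ i k, 0 ≤ (W * Q) i k) (hWQ1 : ∀ k, ∑ i, (W * Q) i k = ρ) :
    ((W * Q)ᵀ * (W * Q)).det < (Wᵀ * W).det := by
  have hd : 0 < (Wᵀ * W).det := det_pos_of_rank W hWrank
  -- columns of Q sum to 1
  have hQcol : ∀ k, ∑ j, Q j k = 1 := by
    intro k
    have h1 : ρ * (∑ j, Q j k) = ρ * 1 := by
      rw [mul_one]
      calc ρ * (∑ j, Q j k) = ∑ j, (∑ i, W i j) * Q j k := by
            rw [Finset.mul_sum]
            exact Finset.sum_congr rfl fun j _ => by rw [hW1 j]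
        _ = ∑ j, ∑ i, W i j * Q j k := by
            exact Finset.sum_congr rfl fun j _ => by rw [Finset.sum_mul]
        _ = ∑ i, ∑ j, W i j * Q j k := Finset.sum_comm
        _ = ∑ i, (W * Q) i k := by
            exact Finset.sum_congr rfl fun i _ => by rw [Matrix.mul_apply]
        _ = ρ := hWQ1 k
    exact mul_left_cancel₀ hρ.ne' h1
  -- columns of Q have squared norm at most 1
  have hQnorm : ∀ k, ∑ j, (Q j k)^2 ≤ 1 := by
    intro k
    have hdual : ∀ x ∈ socC K, 0 ≤ ∑ j, x j * Q j k := by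
      intro x hx
      obtain ⟨θ, hθ, hxe⟩ := hWssc.1 hx
      have hxj : ∀ j, x j = ∑ i, W i j * θ i := by
        intro j
        rw [hxe]
        simp [Matrix.mulVec, dotProduct, Matrix.transpose_apply]
      calc (0:ℝ) ≤ ∑ i, θ i * ((W * Q) i k) :=
            Finset.sum_nonneg fun i _ => mul_nonneg (hθ i) (hWQ0 i k)
        _ = ∑ i, ∑ j, θ i * (W i j * Q j k) := by
            refine Finset.sum_congr rfl fun i _ => ?_
            rw [Matrix.mul_apply, Finset.mul_sum]
        _ = ∑ j, ∑ i, θ i * (W i j * Q j k) := Finset.sum_comm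
        _ = ∑ j, x j * Q j k := by
            refine Finset.sum_congr rfl fun j _ => ?_
            rw [hxj j, Finset.sum_mul]
            exact Finset.sum_congr rfl fun i _ => by ring
    have := dual_bound (fun j => Q j k) hdual
    rwa [hQcol k, one_pow] at this
  -- |det Q| < 1
  have hdetQ : Q.det ^ 2 < 1 := by
    by_contra hcon
    push_neg at hcon
    have hS1 : Qᵀ * Q = 1 := by
      apply psd_eq_one
      · have := Matrix.posSemidef_conjTranspose_mul_self Q
        rwa [Matrix.conjTranspose_eq_transpose_of_trivial] at this
      · calc (Qᵀ * Q).trace = ∑ k, ∑ j, Q j k * Q j k := by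
              rw [Matrix.trace]
              refine Finset.sum_congr rfl fun k _ => ?_
              rw [Matrix.diag_apply, Matrix.mul_apply]
              exact Finset.sum_congr rfl fun j _ => by rw [Matrix.transpose_apply]
          _ ≤ ∑ _k : Fin K, (1:ℝ) := by
              refine Finset.sum_le_sum fun k _ => ?_
              have := hQnorm k
              calc ∑ j, Q j k * Q j k = ∑ j, (Q j k)^2 :=
                    Finset.sum_congr rfl fun j _ => (sq (Q j k)).symm
                _ ≤ 1 := this
          _ = (K:ℝ) := by simp
      · rw [Matrix.det_mul, Matrix.det_transpose, ← sq]
        exact hcon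
    have hincl : coneOf Wᵀ ⊆ coneOf Q := by
      rintro x ⟨θ, hθ, hxe⟩
      refine ⟨Qᵀ.mulVec x, ?_, ?_⟩
      · intro k
        have hxj : ∀ j, x j = ∑ i, W i j * θ i := by
          intro j
          rw [hxe]
          simp [Matrix.mulVec, dotProduct, Matrix.transpose_apply]
        have : Qᵀ.mulVec x k = ∑ i, θ i * ((W * Q) i k) := by
          calc Qᵀ.mulVec x k = ∑ j, Q j k * x j := by
                simp [Matrix.mulVec, dotProduct, Matrix.transpose_apply]
            _ = ∑ j, ∑ i, Q j k * (W i j * θ i) := by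
                refine Finset.sum_congr rfl fun j _ => ?_
                rw [hxj j, Finset.mul_sum]
            _ = ∑ i, ∑ j, Q j k * (W i j * θ i) := Finset.sum_comm
            _ = ∑ i, θ i * ((W * Q) i k) := by
                refine Finset.sum_congr rfl fun i _ => ?_
                rw [Matrix.mul_apply, Finset.mul_sum]
                exact Finset.sum_congr rfl fun j _ => by ring
        rw [this]
        exact Finset.sum_nonneg fun i _ => mul_nonneg (hθ i) (hWQ0 i k)
      · rw [Matrix.mulVec_mulVec, mul_eq_one_comm.mp hS1, Matrix.one_mulVec]
    exact hWssc.2 Q hS1 hQnp hincl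
  -- conclude
  have hfact : ((W * Q)ᵀ * (W * Q)).det = Q.det ^ 2 * (Wᵀ * W).det := by
    have h1 : (W * Q)ᵀ * (W * Q) = Qᵀ * (Wᵀ * W) * Q := by
      rw [Matrix.transpose_mul]
      rw [Matrix.mul_assoc, Matrix.mul_assoc, Matrix.mul_assoc]
    rw [h1, Matrix.det_mul, Matrix.det_mul, Matrix.det_transpose]
    ring
  rw [hfact]
  calc Q.det ^ 2 * (Wᵀ * W).det < 1 * (Wᵀ * W).det :=
        mul_lt_mul_of_pos_right hdetQ hd
    _ = (Wᵀ * W).det := one_mul _
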